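/- If ω + iT is a flat sl₂(ℂ)-type connection form on an oriented hyperbolic 3-manifold (i.e., d(ω+iT) + (ω+iT)∧(ω+iT) = 0) with T_{ij}(Y) = g(Y×S_j, S_i) for an orthonormal frame S, then cs(ω+iT) = 8i dvol_g + i d(Tr(T∧ω)) + Tr(ω∧dω + (2/3)ω³). -/
import Mathlib


/-!
Forms on an oriented hyperbolic 3-manifold, formalized abstractly by a
differential graded algebra `A` of matrix (`so(3) ⊗ ℂ`)-valued forms with
scalar forms `S`.  Here `ω` is the Levi-Civita connection 1-form in an
orthonormal frame `S`, `T` is the `so(3)`-valued 1-form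
`T_{ij}(Y) = g(Y × S_j, S_i)` — whose only properties used are the flatness
equations `dω + ω² − T² = 0`, `dT + T∧ω + ω∧T = 0` of the flat sl₂(ℂ)-type
connection `ω + iT`, and `Tr(T³) = 6 dvol_g` — and `vol` denotes the volume
form `dvol_g`.  Conclusion:
`cs(ω + iT) = 8i dvol_g + i d(Tr(T∧ω)) + Tr(ω∧dω + (2/3)ω³)`.
-/
theorem stmt_12
    {A S : Type*} [Ring A] [Algebra ℂ A] [CommRing S] [Algebra ℂ S]
    (dA : A →ₗ[ℂ] A) (dS : S →ₗ[ℂ] S) (tr : A →ₗ[ℂ] S)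
    (deg : A → ℕ → Prop)
    (hdeg_d : ∀ a k, deg a k → deg (dA a) (k + 1))
    (hdeg_mul : ∀ a b k l, deg a k → deg b l → deg (a * b) (k + l))
    (hdd : ∀ a : A, dA (dA a) = 0)
    (hLeib : ∀ (a b : A) (k : ℕ), deg a k →
      dA (a * b) = dA a * b + ((-1 : ℂ) ^ k) • (a * dA b))
    (htr_cyc : ∀ (a b : A) (k l : ℕ), deg a k → deg b l →
      tr (a * b) = ((-1 : ℂ) ^ (k * l)) • tr (b * a))
    (htrd : ∀ a : A, dS (tr a) = tr (dA a))
    (ω T : A) (hω : deg ω 1) (hT : deg T 1)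
    (hflat1 : dA ω + ω * ω - T * T = 0)
    (hflat2 : dA T + T * ω + ω * T = 0)
    (vol : S) (hvol : tr (T * T * T) = (6 : ℂ) • vol) :
    tr ((ω + Complex.I • T) * dA (ω + Complex.I • T))
      + ((2 : ℂ) / 3) • tr ((ω + Complex.I • T) * (ω + Complex.I • T)
          * (ω + Complex.I • T))
      = ((8 : ℂ) * Complex.I) • vol + Complex.I • dS (tr (T * ω))
        + (tr (ω * dA ω) + ((2 : ℂ) / 3) • tr (ω * ω * ω)) := by
  have hdω : dA ω = T*T - ω*ω := eq_sub_of_add_eq (sub_eq_zero.mp hflat1)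
  have hdT : dA T = -(T*ω + ω*T) := by
    have h2 : dA T + (T*ω + ω*T) = 0 := by rw [← add_assoc]; exact hflat2
    exact eq_neg_of_add_eq_zero_left h2
  have cyc : ∀ a b c : A, deg a 1 → deg b 1 → deg c 1 →
      tr (a*(b*c)) = tr (b*(c*a)) := by
    intro a b c ha hb hc
    have := htr_cyc a (b*c) 1 2 ha (hdeg_mul b c 1 1 hb hc)
    simpa [mul_assoc] using this
  have hQa : tr (T*(ω*ω)) = tr (ω*(ω*T)) := cyc T ω ω hT hω hω
  have hQb : tr (ω*(T*ω)) = tr (ω*(ω*T)) := (cyc ω T ω hω hT hω).trans hQa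
  have hRa : tr (T*(ω*T)) = tr (ω*(T*T)) := cyc T ω T hT hω hT
  have hRb : tr (T*(T*ω)) = tr (ω*(T*T)) := (cyc T T ω hT hT hω).trans hRa
  have hV : tr (T*(T*T)) = (6:ℂ) • vol := by rw [← mul_assoc]; exact hvol
  have hdS : dS (tr (T*ω)) = tr ((-(T*ω+ω*T))*ω) - tr (T*(T*T-ω*ω)) := by
    rw [htrd, hLeib T ω 1 hT, hdω, hdT]
    simp [sub_eq_add_neg]
  simp only [map_add, map_smul, hdω, hdT, mul_add, add_mul, smul_mul_assoc,
    mul_smul_comm, mul_sub, sub_mul, mul_neg, neg_mul, map_sub, map_neg,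
    smul_add, smul_sub, smul_neg, smul_smul, Complex.I_mul_I, mul_assoc] at hdS ⊢
  rw [hdS, hQa, hQb, hRa, hRb, hV]
  module
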